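/- For every complex s with Re(s) > 1/2, the random Dirichlet series over primes ∑_p f(p) p^{−s} converges almost surely. -/

import Mathlib

open MeasureTheory ProbabilityTheory Filter
open scoped Topology ENNReal

lemma aux_converge {Ω : Type*} [MeasurableSpace Ω] (μ : Measure Ω) [IsProbabilityMeasure μ]
    (X : ℕ → Ω → ℝ) (c : ℕ → ℝ)
    (hXm : ∀ n, Measurable (X n))
    (hXindep : iIndepFun X μ)
    (hmean : ∀ n, μ[X n] = 0)
    (hbd : ∀ n, ∀ᵐ ω ∂μ, |X n ω| ≤ c n)
    (hc : Summable (fun n => c n ^ 2)) :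
    ∀ᵐ ω ∂μ, ∃ L, Tendsto (fun N => ∑ k ∈ Finset.range N, X k ω) atTop (𝓝 L) := by
  classical
  set C : ℝ := ∑' n, c n ^ 2 with hC
  have hXsm : ∀ n, StronglyMeasurable (X n) := fun n => (hXm n).stronglyMeasurable
  have hX2 : ∀ n, MemLp (X n) 2 μ := fun n =>
    MemLp.of_bound (hXsm n).aestronglyMeasurable (c n) <| by
      filter_upwards [hbd n] with ω hω using by rwa [Real.norm_eq_abs]
  have hXint : ∀ n, Integrable (X n) μ := fun n => (hX2 n).integrable one_le_two
  set ℱ := Filtration.natural X hXsm with hℱ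
  set S : ℕ → Ω → ℝ := fun n => ∑ k ∈ Finset.range (n + 1), X k with hS
  have hS2 : ∀ n, MemLp (S n) 2 μ := fun n => memLp_finsetSum' _ fun k _ => hX2 k
  have hSint : ∀ n, Integrable (S n) μ := fun n => (hS2 n).integrable one_le_two
  have hadapted : StronglyAdapted ℱ S := by
    intro n
    apply Finset.stronglyMeasurable_sum
    intro k hk
    have hk' : k ≤ n := Nat.lt_succ_iff.mp (Finset.mem_range.mp hk)
    exact ((Filtration.stronglyAdapted_natural hXsm) k).mono (ℱ.mono hk')
  have hmart : Martingale S ℱ μ := by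
    refine ⟨hadapted, fun i j hij => ?_⟩
    have hsplit : S j = S i + ∑ k ∈ Finset.Ico (i + 1) (j + 1), X k := by
      rw [hS]
      simp only
      rw [Finset.range_eq_Ico, ← Finset.sum_Ico_consecutive _ (Nat.zero_le (i+1))
        (Nat.succ_le_succ hij), ← Finset.range_eq_Ico]
    have h1 : μ[S j|ℱ i] =ᵐ[μ] μ[S i|ℱ i] + μ[∑ k ∈ Finset.Ico (i + 1) (j + 1), X k|ℱ i] := by
      rw [hsplit]
      exact condExp_add (hSint i)
        (integrable_finset_sum' _ fun k _ => hXint k) _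
    have h2 : μ[S i|ℱ i] = S i :=
      condExp_of_stronglyMeasurable (ℱ.le i) (hadapted i) (hSint i)
    have h3 : μ[∑ k ∈ Finset.Ico (i + 1) (j + 1), X k|ℱ i] =ᵐ[μ] 0 := by
      refine (condExp_finsetSum (fun k _ => hXint k) _).trans ?_
      have hz : ∀ k ∈ Finset.Ico (i + 1) (j + 1), μ[X k|ℱ i] =ᵐ[μ] 0 := by
        intro k hk
        have hik : i < k := Nat.lt_of_succ_le (Finset.mem_Ico.mp hk).1
        refine (hXindep.condExp_natural_ae_eq_of_lt hXsm hik).trans ?_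
        rw [hmean k]
        rfl
      have : ∀ᵐ ω ∂μ, ∀ k ∈ Finset.Ico (i + 1) (j + 1), (μ[X k|ℱ i]) ω = 0 := by
        rw [Finset.eventually_all]
        exact hz
      filter_upwards [this] with ω hω
      simp only [Finset.sum_apply, Pi.zero_apply]
      exact Finset.sum_eq_zero hω
    refine h1.trans ?_
    rw [h2]
    filter_upwards [h3] with ω h3ω
    simp only [Pi.add_apply, h3ω, Pi.zero_apply, add_zero]
  -- variance bound
  have hvar : ∀ n, variance (S n) μ ≤ C := by
    intro n
    have hv : variance (S n) μ = ∑ k ∈ Finset.range (n+1), variance (X k) μ :=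
      IndepFun.variance_sum (fun k _ => hX2 k)
        (fun k hk l hl hkl => hXindep.indepFun hkl)
    rw [hv]
    calc ∑ k ∈ Finset.range (n+1), variance (X k) μ
        ≤ ∑ k ∈ Finset.range (n+1), c k ^ 2 := by
          apply Finset.sum_le_sum
          intro k _
          calc variance (X k) μ ≤ μ[(X k) ^ 2] :=
                variance_le_expectation_sq (hXsm k).aestronglyMeasurable
            _ ≤ c k ^ 2 := by
                have hint : Integrable ((X k) ^ 2) μ := by
                  exact (hX2 k).integrable_sq
                have : μ[(X k) ^ 2] ≤ μ[(fun _ => c k ^ 2 : Ω → ℝ)] := by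
                  apply integral_mono_ae hint (integrable_const _)
                  filter_upwards [hbd k] with ω hω
                  simp only [Pi.pow_apply]
                  calc X k ω ^ 2 = |X k ω| ^ 2 := (sq_abs _).symm
                    _ ≤ c k ^ 2 := by
                      apply pow_le_pow_left₀ (abs_nonneg _) hω
                simpa using this
      _ ≤ C := Summable.sum_le_tsum (Finset.range (n+1)) (fun k _ => sq_nonneg _) hc
  have hmean' : ∀ n, μ[S n] = 0 := by
    intro n
    have : μ[S n] = ∑ k ∈ Finset.range (n+1), μ[X k] := by
      simp only [hS, Finset.sum_apply]
      exact integral_finset_sum _ fun k _ => hXint k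
    rw [this]
    exact Finset.sum_eq_zero fun k _ => hmean k
  -- L¹ bound
  set B : ℝ≥0∞ := ENNReal.ofReal C ^ (1/2 : ℝ) with hB
  have hBne : B ≠ ∞ := ENNReal.rpow_ne_top_of_nonneg (by norm_num) ENNReal.ofReal_ne_top
  have hbdd : ∀ n, eLpNorm (S n) 1 μ ≤ (B.toNNReal : ℝ≥0∞) := by
    intro n
    rw [ENNReal.coe_toNNReal hBne]
    have h12 : eLpNorm (S n) 1 μ ≤ eLpNorm (S n) 2 μ :=
      eLpNorm_le_eLpNorm_of_exponent_le (by norm_num) (hS2 n).aestronglyMeasurable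
    refine h12.trans ?_
    have h2e : eLpNorm (S n) 2 μ = evariance (S n) μ ^ (1/2 : ℝ) := by
      rw [eLpNorm_eq_lintegral_rpow_enorm_toReal two_ne_zero ENNReal.ofNat_ne_top, evariance, hmean' n]
      simp only [ENNReal.toReal_ofNat, sub_zero, ENNReal.rpow_two]
    rw [h2e, hB, ← (hS2 n).ofReal_variance_eq]
    exact ENNReal.rpow_le_rpow (ENNReal.ofReal_le_ofReal (hvar n)) (by norm_num)
  have hconv := hmart.submartingale.exists_ae_tendsto_of_bdd hbdd
  filter_upwards [hconv] with ω hω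
  obtain ⟨L, hL⟩ := hω
  refine ⟨L, ?_⟩
  rw [← tendsto_add_atTop_iff_nat (f := fun N => ∑ k ∈ Finset.range N, X k ω) 1]
  convert hL using 1
  funext n
  simp [hS]


lemma aux_extend {Ω : Type*} [MeasurableSpace Ω] {μ : Measure Ω} [IsProbabilityMeasure μ]
    {P : ℕ → Prop} [DecidablePred P] {f : ℕ → Ω → ℝ}
    (h : iIndepFun
      (fun p : Subtype P => f p) μ) :
    iIndepFun
      (fun n => if P n then f n else fun _ => 0) μ := by
  classical
  rw [iIndepFun_iff_measure_inter_preimage_eq_mul] at h ⊢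
  intro S sets hsets
  by_cases hall : ∀ n ∈ S, ¬ P n → (0:ℝ) ∈ sets n
  · have hT := h (S.subtype P) (sets := fun p => sets p)
      (fun p hp => hsets p (by simpa using (Finset.mem_subtype.mp hp)))
    have hinter : (⋂ n ∈ S, (if P n then f n else fun _ => 0) ⁻¹' sets n)
        = ⋂ p ∈ S.subtype P, f (p : ℕ) ⁻¹' sets (p : ℕ) := by
      ext ω
      simp only [Set.mem_iInter, Set.mem_preimage, Finset.mem_subtype, Subtype.forall]
      constructor
      · intro hω p hp hmem
        have := hω p hmem
        rwa [if_pos hp] at this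
      · intro hω n hn
        by_cases hp : P n
        · rw [if_pos hp]; exact hω n hp hn
        · rw [if_neg hp]; exact hall n hn hp
    have hprod : ∏ n ∈ S, μ ((if P n then f n else fun _ => 0) ⁻¹' sets n)
        = ∏ p ∈ S.subtype P, μ (f (p : ℕ) ⁻¹' sets (p : ℕ)) := by
      have hsub : ∏ p ∈ S.subtype P, μ (f (p : ℕ) ⁻¹' sets (p : ℕ))
          = ∏ n ∈ S.filter P, μ (f n ⁻¹' sets n) :=
        Finset.prod_subtype_eq_prod_filter (fun n => μ (f n ⁻¹' sets n))
      rw [hsub]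
      rw [← Finset.prod_filter_mul_prod_filter_not S P
        (fun n => μ ((if P n then f n else fun _ => 0) ⁻¹' sets n))]
      have h1 : ∏ n ∈ S.filter P, μ ((if P n then f n else fun _ => 0) ⁻¹' sets n)
          = ∏ n ∈ S.filter P, μ (f n ⁻¹' sets n) := by
        apply Finset.prod_congr rfl
        intro n hn
        rw [if_pos (Finset.mem_filter.mp hn).2]
      have h2 : ∏ n ∈ S.filter (fun n => ¬ P n), μ ((if P n then f n else fun _ => 0) ⁻¹' sets n)
          = 1 := by
        apply Finset.prod_eq_one
        intro n hn
        obtain ⟨hnS, hnP⟩ := Finset.mem_filter.mp hn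
        rw [if_neg hnP]
        have : (fun _ : Ω => (0:ℝ)) ⁻¹' sets n = Set.univ := by
          ext ω; simp [hall n hnS hnP]
        rw [this, measure_univ]
      rw [h1, h2, mul_one]
    rw [hinter, hprod]
    exact hT
  · push_neg at hall
    obtain ⟨n, hnS, hnP, hn0⟩ := hall
    have hempty : (if P n then f n else fun _ => 0) ⁻¹' sets n = ∅ := by
      rw [if_neg hnP]
      ext ω; simp [hn0]
    have hleft : μ (⋂ m ∈ S, (if P m then f m else fun _ => 0) ⁻¹' sets m) = 0 := by
      refine measure_mono_null ?_ (by simp : μ (∅ : Set Ω) = 0)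
      intro ω hω
      rw [← hempty]
      exact Set.mem_iInter₂.mp hω n hnS
    rw [hleft]
    symm
    apply Finset.prod_eq_zero hnS
    rw [hempty, measure_empty]


section Aux

lemma aux_rademacher_props {Ω : Type*} [MeasurableSpace Ω] (μ : Measure Ω) [IsProbabilityMeasure μ]
    (g : Ω → ℝ) (hg : Measurable g)
    (h1 : μ {ω | g ω = 1} = 1/2) (h2 : μ {ω | g ω = -1} = 1/2) :
    μ[g] = 0 ∧ (∀ᵐ ω ∂μ, |g ω| = 1) := by
  set A : Set Ω := {ω | g ω = 1} with hA
  set B : Set Ω := {ω | g ω = -1} with hB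
  have hAm : MeasurableSet A := hg (measurableSet_singleton 1)
  have hBm : MeasurableSet B := hg (measurableSet_singleton (-1))
  have hdisj : Disjoint A B := by
    rw [Set.disjoint_left]
    intro ω hωA hωB
    have e1 : g ω = 1 := hωA
    have e2 : g ω = -1 := hωB
    rw [e1] at e2
    norm_num at e2
  have hU : μ (A ∪ B) = 1 := by
    rw [measure_union hdisj hBm, h1, h2, ENNReal.add_halves]
  have hae : ∀ᵐ ω ∂μ, ω ∈ A ∪ B := by
    have hcompl : μ (A ∪ B)ᶜ = 0 := by
      rw [measure_compl (hAm.union hBm) (measure_ne_top _ _), hU, measure_univ, tsub_self]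
    exact (ae_iff.mpr hcompl)
  constructor
  · have heq : g =ᵐ[μ] fun ω => A.indicator (fun _ => (1:ℝ)) ω - B.indicator (fun _ => (1:ℝ)) ω := by
      filter_upwards [hae] with ω hω
      rcases hω with hωA | hωB
      · have hfω : g ω = 1 := hωA
        have hωB : ω ∉ B := by
          intro hωB
          have : g ω = -1 := hωB
          rw [hfω] at this; norm_num at this
        rw [Set.indicator_of_mem hωA, Set.indicator_of_notMem hωB, hfω]
        ring
      · have hfω : g ω = -1 := hωB
        have hωA : ω ∉ A := by
          intro hωA
          have : g ω = 1 := hωA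
          rw [hfω] at this; norm_num at this
        rw [Set.indicator_of_mem hωB, Set.indicator_of_notMem hωA, hfω]
        ring
    rw [integral_congr_ae heq]
    rw [integral_sub ((integrable_const (1:ℝ)).indicator hAm)
      ((integrable_const (1:ℝ)).indicator hBm)]
    rw [integral_indicator_const _ hAm, integral_indicator_const _ hBm, measureReal_def, measureReal_def, h1, h2]
    simp
  · filter_upwards [hae] with ω hω
    rcases hω with hωA | hωB
    · have : g ω = 1 := hωA
      rw [this]; norm_num
    · have : g ω = -1 := hωB
      rw [this]; norm_num

end Aux

/-- For every complex `s` with `Re(s) > 1/2`, the random Dirichlet series over primes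
`∑_p f(p) p^{-s}` converges almost surely. -/
theorem prime_dirichlet_series_converges
    {Ω : Type*} [MeasurableSpace Ω] (μ : Measure Ω) [IsProbabilityMeasure μ]
    (f : ℕ → Ω → ℝ)
    (hmeas : ∀ n : ℕ, Measurable (f n))
    (hindep : iIndepFun
      (fun p : Nat.Primes => f p) μ)
    (hrad : ∀ p : ℕ, p.Prime →
      μ {ω | f p ω = 1} = 1/2 ∧ μ {ω | f p ω = -1} = 1/2) :
    ∀ s : ℂ, 1/2 < s.re →
      ∀ᵐ ω ∂μ, ∃ L : ℂ,
        Tendsto (fun N : ℕ => ∑ p ∈ Finset.filter Nat.Prime (Finset.range N),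
          (f p ω : ℂ) / (p : ℂ) ^ s) atTop (nhds L) := by
  classical
  intro s hs
  set g : ℕ → Ω → ℝ := fun n => if n.Prime then f n else fun _ => 0 with hgdef
  have hgmeas : ∀ n, Measurable (g n) := by
    intro n
    by_cases hp : n.Prime
    · simpa [hgdef, hp] using hmeas n
    · simpa [hgdef, hp] using measurable_const
  have hgindep : iIndepFun g μ :=
    aux_extend (P := Nat.Prime) hindep
  have hgprops : ∀ n, μ[g n] = 0 ∧ (∀ᵐ ω ∂μ, |g n ω| ≤ if n.Prime then 1 else 0) := by
    intro n
    by_cases hp : n.Prime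
    · obtain ⟨hm, hone⟩ := aux_rademacher_props μ (f n) (hmeas n) (hrad n hp).1 (hrad n hp).2
      refine ⟨by simpa [hgdef, hp] using hm, ?_⟩
      filter_upwards [hone] with ω hω
      simp [hgdef, hp, hω]
    · refine ⟨by simp [hgdef, hp], ?_⟩
      filter_upwards with ω
      simp [hgdef, hp]
  -- the complex coefficient
  set z : ℕ → ℂ := fun n => (1:ℂ) / (n:ℂ) ^ s with hzdef
  set c : ℕ → ℝ := fun n => if n.Prime then ‖z n‖ else 0 with hcdef
  have hcsumm : Summable (fun n => c n ^ 2) := by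
    have hsumm : Summable (fun n : ℕ => (n:ℝ) ^ (-(2 * s.re))) := by
      rw [Real.summable_nat_rpow]
      linarith
    apply Summable.of_nonneg_of_le (fun n => sq_nonneg _) _ hsumm
    intro n
    by_cases hp : n.Prime
    · have hn0 : (0:ℝ) < (n:ℝ) := by
        exact_mod_cast hp.pos
      have hnorm : ‖z n‖ = (n:ℝ) ^ (-s.re) := by
        rw [hzdef]
        simp only [norm_div, norm_one]
        rw [← Complex.ofReal_natCast,
          Complex.norm_cpow_eq_rpow_re_of_pos hn0]
        rw [Real.rpow_neg hn0.le]
        simp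
      simp only [hcdef, if_pos hp, hnorm]
      rw [← Real.rpow_natCast ((n:ℝ) ^ (-s.re)) 2, ← Real.rpow_mul hn0.le]
      apply le_of_eq
      congr 1
      push_cast
      ring
    · simp only [hcdef, if_neg hp]
      norm_num
      positivity
  -- real and imaginary part processes
  set X1 : ℕ → Ω → ℝ := fun n ω => g n ω * (z n).re with hX1def
  set X2 : ℕ → Ω → ℝ := fun n ω => g n ω * (z n).im with hX2def
  have hconv1 : ∀ᵐ ω ∂μ, ∃ L, Tendsto (fun N => ∑ k ∈ Finset.range N, X1 k ω) atTop (𝓝 L) := by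
    apply aux_converge μ X1 c (fun n => (hgmeas n).mul_const _)
      (hgindep.comp (fun n x => x * (z n).re) (fun n => measurable_mul_const _))
    · intro n
      rw [hX1def]
      simp only
      rw [integral_mul_const]
      rw [(hgprops n).1, zero_mul]
    · intro n
      filter_upwards [(hgprops n).2] with ω hω
      rw [hX1def, hcdef]
      simp only [abs_mul]
      by_cases hp : n.Prime
      · rw [if_pos hp]
        calc |g n ω| * |(z n).re| ≤ 1 * ‖z n‖ := by
              apply mul_le_mul (by simpa [hp] using hω) (Complex.abs_re_le_norm _)
                (abs_nonneg _) zero_le_one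
          _ = ‖z n‖ := one_mul _
      · rw [if_neg hp]
        have : g n ω = 0 := by simp [hgdef, hp]
        simp [this]
    · exact hcsumm
  have hconv2 : ∀ᵐ ω ∂μ, ∃ L, Tendsto (fun N => ∑ k ∈ Finset.range N, X2 k ω) atTop (𝓝 L) := by
    apply aux_converge μ X2 c (fun n => (hgmeas n).mul_const _)
      (hgindep.comp (fun n x => x * (z n).im) (fun n => measurable_mul_const _))
    · intro n
      rw [hX2def]
      simp only
      rw [integral_mul_const]
      rw [(hgprops n).1, zero_mul]
    · intro n
      filter_upwards [(hgprops n).2] with ω hω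
      rw [hX2def, hcdef]
      simp only [abs_mul]
      by_cases hp : n.Prime
      · rw [if_pos hp]
        calc |g n ω| * |(z n).im| ≤ 1 * ‖z n‖ := by
              apply mul_le_mul (by simpa [hp] using hω) (Complex.abs_im_le_norm _)
                (abs_nonneg _) zero_le_one
          _ = ‖z n‖ := one_mul _
      · rw [if_neg hp]
        have : g n ω = 0 := by simp [hgdef, hp]
        simp [this]
    · exact hcsumm
  filter_upwards [hconv1, hconv2] with ω hω1 hω2
  obtain ⟨L1, hL1⟩ := hω1
  obtain ⟨L2, hL2⟩ := hω2
  refine ⟨(L1 : ℂ) + (L2 : ℂ) * Complex.I, ?_⟩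
  have key : ∀ N : ℕ, ∑ p ∈ Finset.filter Nat.Prime (Finset.range N), (f p ω : ℂ) / (p : ℂ) ^ s
      = ((∑ k ∈ Finset.range N, X1 k ω : ℝ) : ℂ)
        + ((∑ k ∈ Finset.range N, X2 k ω : ℝ) : ℂ) * Complex.I := by
    intro N
    rw [Finset.sum_filter]
    push_cast
    rw [Finset.sum_mul, ← Finset.sum_add_distrib]
    apply Finset.sum_congr rfl
    intro k hk
    by_cases hp : k.Prime
    · rw [if_pos hp]
      have hg : g k ω = f k ω := by simp [hgdef, hp]
      have hX1 : X1 k ω = f k ω * (z k).re := by rw [hX1def]; simp [hg]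
      have hX2 : X2 k ω = f k ω * (z k).im := by rw [hX2def]; simp [hg]
      rw [hX1, hX2]
      have hdiv : (f k ω : ℂ) / (k : ℂ) ^ s = (f k ω : ℂ) * z k := by
        rw [hzdef]
        simp only
        rw [mul_one_div]
      rw [hdiv]
      conv_lhs => rw [← Complex.re_add_im (z k)]
      push_cast
      ring
    · rw [if_neg hp]
      have hg : g k ω = 0 := by simp [hgdef, hp]
      have hX1 : X1 k ω = 0 := by rw [hX1def]; simp [hg]
      have hX2 : X2 k ω = 0 := by rw [hX2def]; simp [hg]
      rw [hX1, hX2]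
      simp
  have : Tendsto (fun N : ℕ => ((∑ k ∈ Finset.range N, X1 k ω : ℝ) : ℂ)
      + ((∑ k ∈ Finset.range N, X2 k ω : ℝ) : ℂ) * Complex.I) atTop
      (𝓝 ((L1 : ℂ) + (L2 : ℂ) * Complex.I)) := by
    apply Tendsto.add
    · exact (Complex.continuous_ofReal.continuousAt.tendsto.comp hL1)
    · exact Tendsto.mul_const _ (Complex.continuous_ofReal.continuousAt.tendsto.comp hL2)
  refine this.congr ?_
  intro N
  exact (key N).symm
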